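/- (Concretizer soundness) If the greedy concretizer procedure, run on input sets D and F with D ∩ F = ∅, returns a policy π (not ⊥), then π is proper, domain(π) = D, and front(π) ⊆ F. -/

import Mathlib

/-- The domain of a policy (partial function from states to actions). -/
def pdom {S A : Type*} (π : S → Option A) : Set S := {s | π s ≠ none}

/-- One π-transition step: from `s` take the action `π s` prescribes, landing in a successor. -/
def pstep {S A : Type*} (succs : S → A → Set S) (π : S → Option A) (s s' : S) : Prop :=
  ∃ a, π s = some a ∧ s' ∈ succs s a

/-- `reachFrom succs π s` : states reachable from `s` by π-trajectories (including `s`). -/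
def reachFrom {S A : Type*} (succs : S → A → Set S) (π : S → Option A) (s : S) : Set S :=
  {s' | Relation.ReflTransGen (pstep succs π) s s'}

/-- `reachAll succs π` : states reachable from some domain state of `π`. -/
def reachAll {S A : Type*} (succs : S → A → Set S) (π : S → Option A) : Set S :=
  ⋃ s ∈ pdom π, reachFrom succs π s

/-- Frontier of a policy: reachable but unmapped states. -/
def front {S A : Type*} (succs : S → A → Set S) (π : S → Option A) : Set S :=
  reachAll succs π \ pdom π

/-- `escape succs π s` : frontier states π-reachable from `s`. -/
def escape {S A : Type*} (succs : S → A → Set S) (π : S → Option A) (s : S) : Set S :=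
  reachFrom succs π s ∩ front succs π

/-- A policy is proper iff every domain state reaches a frontier state. -/
def proper {S A : Type*} (succs : S → A → Set S) (π : S → Option A) : Prop :=
  ∀ s ∈ pdom π, (escape succs π s).Nonempty

/-- `π'` is a sub-policy of `π` : restriction of `π` to a subset of its domain. -/
def subpolicy {S A : Type*} (π' π : S → Option A) : Prop :=
  ∀ s a, π' s = some a → π s = some a

/-- Goal-closed: every frontier state is a goal state. -/
def goalClosed {S A : Type*} (succs : S → A → Set S) (Sg : Set S) (π : S → Option A) : Prop :=
  front succs π ⊆ Sg

/-- `remain(π) = (front(π) \ S*) ∪ ({s₀} \ (S* ∪ domain(π)))`. -/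
def remainSet {S A : Type*} (succs : S → A → Set S) (Sg : Set S) (s0 : S)
    (π : S → Option A) : Set S :=
  (front succs π \ Sg) ∪ ({s0} \ (Sg ∪ pdom π))

/-- A solution: a strong-cyclic (goal-closed and proper) policy covering the initial state. -/
def isSolution {S A : Type*} (succs : S → A → Set S) (Sg : Set S) (s0 : S)
    (π : S → Option A) : Prop :=
  goalClosed succs Sg π ∧ proper succs π ∧ s0 ∈ Sg ∪ pdom π

/-- `CRun app succs D F π` : the policy `π` can be produced by a sequence of steps of the
greedy concretizer on input `(D, F)`, starting from the empty policy.  Each step picks an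
unmapped `s ∈ D` and an applicable action `a` with `succs s a ∩ (F ∪ D_handled) ≠ ∅` and
`succs s a ⊆ D ∪ F`. -/
inductive CRun {S A : Type*} [DecidableEq S] (app : S → A → Prop)
    (succs : S → A → Set S) (D F : Set S) : (S → Option A) → Prop
  | nil : CRun app succs D F (fun _ => none)
  | step {π : S → Option A} {s : S} {a : A} :
      CRun app succs D F π → s ∈ D → π s = none → app s a →
      (succs s a ∩ (F ∪ pdom π)).Nonempty →
      succs s a ⊆ D ∪ F →
      CRun app succs D F (Function.update π s (some a))

lemma pstep_update_mono {S A : Type*} [DecidableEq S] (succs : S → A → Set S)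
    (π : S → Option A) (s : S) (a : A) (hs : π s = none) :
    ∀ u v, pstep succs π u v → pstep succs (Function.update π s (some a)) u v := by
  rintro u v ⟨b, hb, hv⟩
  refine ⟨b, ?_, hv⟩
  rw [Function.update_apply]
  split_ifs with h
  · subst h; rw [hs] at hb; exact absurd hb (by simp)
  · exact hb

lemma crun_inv {S A : Type*} [DecidableEq S] (app : S → A → Prop)
    (succs : S → A → Set S) (D F : Set S)
    (π : S → Option A) (hrun : CRun app succs D F π) :
    (∀ s ∈ pdom π, s ∈ D) ∧
    (∀ s a, π s = some a → succs s a ⊆ D ∪ F) ∧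
    (∀ s ∈ pdom π, ∃ t, t ∈ reachFrom succs π s ∧ t ∈ F) := by
  induction hrun with
  | nil => refine ⟨?_, ?_, ?_⟩ <;> simp [pdom]
  | @step π s a _ hsD hsnone happ hne hsub ih =>
    obtain ⟨ihD, ihsub, ihreach⟩ := ih
    have hpdom : ∀ u, u ∈ pdom (Function.update π s (some a)) ↔ u = s ∨ u ∈ pdom π := by
      intro u
      simp only [pdom, Set.mem_setOf_eq, Function.update_apply]
      split_ifs with h
      · simp [h]
      · simp [h]
    have hlift : ∀ u t, t ∈ reachFrom succs π u →
        t ∈ reachFrom succs (Function.update π s (some a)) u := by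
      intro u t ht
      exact Relation.ReflTransGen.mono (pstep_update_mono succs π s a hsnone) _ _ ht
    refine ⟨?_, ?_, ?_⟩
    · intro u hu
      rcases (hpdom u).1 hu with h | h
      · subst h; exact hsD
      · exact ihD u h
    · intro u b hb
      rw [Function.update_apply] at hb
      split_ifs at hb with h
      · cases hb; subst h; exact hsub
      · exact ihsub u b hb
    · intro u hu
      rcases (hpdom u).1 hu with h | h
      · subst h
        obtain ⟨x, hx1, hx2⟩ := hne
        have hstep : pstep succs (Function.update π u (some a)) u x :=
          ⟨a, by simp, hx1⟩
        rcases hx2 with hxF | hxd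
        · exact ⟨x, Relation.ReflTransGen.single hstep, hxF⟩
        · obtain ⟨t, ht1, ht2⟩ := ihreach x hxd
          exact ⟨t, Relation.ReflTransGen.head hstep (hlift x t ht1), ht2⟩
      · obtain ⟨t, ht1, ht2⟩ := ihreach u h
        exact ⟨t, hlift u t ht1, ht2⟩

/-- Concretizer soundness: if the concretizer terminates returning a policy `π`
(i.e. a run producing `π` has mapped all of `D`), then `π` is proper, has domain `D`,
and its frontier is contained in `F`. -/
theorem concretizer_sound {S A : Type*} [DecidableEq S] (app : S → A → Prop)
    (succs : S → A → Set S) (D F : Set S) (hDF : D ∩ F = ∅)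
    (π : S → Option A) (hrun : CRun app succs D F π) (hdone : pdom π = D) :
    proper succs π ∧ pdom π = D ∧ front succs π ⊆ F := by
  obtain ⟨hD, hsub, hreach⟩ := crun_inv app succs D F π hrun
  have hFnotD : ∀ t ∈ F, t ∉ pdom π := by
    intro t htF ht
    have : t ∈ D ∩ F := ⟨hdone ▸ ht, htF⟩
    rw [hDF] at this; exact this
  refine ⟨?_, hdone, ?_⟩
  · intro s hs
    obtain ⟨t, ht1, ht2⟩ := hreach s hs
    refine ⟨t, ht1, ?_, hFnotD t ht2⟩
    exact Set.mem_biUnion hs ht1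
  · intro t ⟨htr, htd⟩
    obtain ⟨s, hs, hst⟩ := Set.mem_iUnion₂.1 htr
    have key : ∀ v, v ∈ reachFrom succs π s → v ∈ pdom π ∪ F := by
      intro v hv
      induction hv with
      | refl => exact Or.inl hs
      | @tail v w _ hvw ih =>
        obtain ⟨b, hb, hw⟩ := hvw
        have : succs v b ⊆ D ∪ F := hsub v b hb
        rw [← hdone] at this
        exact this hw
    rcases key t hst with h | h
    · exact absurd h htd
    · exact h
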